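/- Let H: [0,T) → ℝ satisfy the Riccati inequality H' + H²/(m−1) + Ric̄(γ',γ') ≤ 0 along a unit-speed geodesic γ, and suppose Ric̄ ≥ −Hess̄ f(γ',γ') − (1/(m−1))((f∘γ)')² (the CD(0,1) condition Ric̄_f¹ ≥ 0 evaluated on γ'). Then H_f := H − (f∘γ)' satisfies H_f' ≤ −H_f²/(m−1) − (2/(m−1))(f∘γ)' H_f, and hence λ(t) = e^{2f(γ(t))/(m−1)} H_f(t) satisfies dλ/ds ≤ −λ²/(m−1) in the reparametrized variable s(t) = ∫₀^t e^{−2f(γ(τ))/(m−1)}dτ. -/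

import Mathlib

/-- along a unit-speed geodesic, if `H` satisfies the
Riccati inequality `H' + H²/(m−1) + Ric̄(γ',γ') ≤ 0` and the `CD(0,1)`
condition `Ric̄(γ',γ') ≥ −f'' − (f')²/(m−1)` holds, then
`H_f = H − f'` satisfies
`H_f' ≤ −H_f²/(m−1) − (2/(m−1)) f' H_f`, and
`λ(t) = e^{2f(t)/(m−1)} H_f(t)` satisfies `dλ/ds ≤ −λ²/(m−1)` in the
variable `s` with `ds/dt = e^{−2f(t)/(m−1)}`, i.e.
`λ'(t) ≤ −(λ(t)²/(m−1)) e^{−2f(t)/(m−1)}`. -/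
theorem riccati_reparametrization
    (m : ℕ) (hm : 3 ≤ m) (T : ℝ) (hT : 0 < T)
    (H f Ric : ℝ → ℝ)
    (hHdiff : ∀ t ∈ Set.Ico (0:ℝ) T, DifferentiableAt ℝ H t)
    (hfdiff : ∀ t ∈ Set.Ico (0:ℝ) T, DifferentiableAt ℝ f t)
    (hf'diff : ∀ t ∈ Set.Ico (0:ℝ) T, DifferentiableAt ℝ (deriv f) t)
    (hRiccati : ∀ t ∈ Set.Ico (0:ℝ) T,
      deriv H t + (H t)^2/((m:ℝ) - 1) + Ric t ≤ 0)
    (hCD : ∀ t ∈ Set.Ico (0:ℝ) T,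
      -(deriv (deriv f) t) - (deriv f t)^2/((m:ℝ) - 1) ≤ Ric t) :
    (∀ t ∈ Set.Ico (0:ℝ) T,
      deriv (fun τ => H τ - deriv f τ) t
        ≤ -(H t - deriv f t)^2/((m:ℝ) - 1)
          - 2/((m:ℝ) - 1) * deriv f t * (H t - deriv f t)) ∧
    (∀ t ∈ Set.Ico (0:ℝ) T,
      deriv (fun τ => Real.exp (2 * f τ/((m:ℝ) - 1)) * (H τ - deriv f τ)) t
        ≤ -((Real.exp (2 * f t/((m:ℝ) - 1)) * (H t - deriv f t))^2/((m:ℝ) - 1))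
          * Real.exp (-2 * f t/((m:ℝ) - 1))) := by
  have hc : (0:ℝ) < (m:ℝ) - 1 := by
    have : (3:ℝ) ≤ (m:ℝ) := by exact_mod_cast hm
    linarith
  have key : ∀ t ∈ Set.Ico (0:ℝ) T,
      deriv (fun τ => H τ - deriv f τ) t
        ≤ -(H t - deriv f t)^2/((m:ℝ) - 1)
          - 2/((m:ℝ) - 1) * deriv f t * (H t - deriv f t) := by
    intro t ht
    have hd : deriv (fun τ => H τ - deriv f τ) t
        = deriv H t - deriv (deriv f) t :=
      deriv_sub (hHdiff t ht) (hf'diff t ht)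
    rw [hd]
    have h1 := hRiccati t ht
    have h2 := hCD t ht
    have hne : ((m:ℝ) - 1) ≠ 0 := ne_of_gt hc
    have heq : -(H t - deriv f t)^2/((m:ℝ) - 1)
        - 2/((m:ℝ) - 1) * deriv f t * (H t - deriv f t)
        = (deriv f t)^2/((m:ℝ) - 1) - (H t)^2/((m:ℝ) - 1) := by
      field_simp; ring
    rw [heq]
    linarith
  refine ⟨key, ?_⟩
  intro t ht
  have hF : HasDerivAt (fun τ => 2 * f τ / ((m:ℝ) - 1))
      (2 * deriv f t / ((m:ℝ) - 1)) t :=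
    (((hfdiff t ht).hasDerivAt).const_mul 2).div_const _
  have hE : HasDerivAt (fun τ => Real.exp (2 * f τ / ((m:ℝ) - 1)))
      (Real.exp (2 * f t / ((m:ℝ) - 1)) * (2 * deriv f t / ((m:ℝ) - 1))) t :=
    hF.exp
  have hG : HasDerivAt (fun τ => H τ - deriv f τ)
      (deriv (fun τ => H τ - deriv f τ) t) t := by
    have := ((hHdiff t ht).hasDerivAt).sub ((hf'diff t ht).hasDerivAt)
    rwa [← deriv_sub (hHdiff t ht) (hf'diff t ht)] at this
  have hL := (hE.fun_mul hG).deriv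
  rw [hL]
  have hexp : Real.exp (-2 * f t / ((m:ℝ) - 1))
      = (Real.exp (2 * f t / ((m:ℝ) - 1)))⁻¹ := by
    rw [← Real.exp_neg]; ring_nf
  rw [hexp]
  have hEpos : 0 < Real.exp (2 * f t / ((m:ℝ) - 1)) := Real.exp_pos _
  have hkey := key t ht
  set E := Real.exp (2 * f t / ((m:ℝ) - 1)) with hEdef
  set g := H t - deriv f t with hgdef
  set D := deriv (fun τ => H τ - deriv f τ) t with hDdef
  have hrhs : -((E * g)^2/((m:ℝ) - 1)) * E⁻¹ = -(E * g^2/((m:ℝ) - 1)) := by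
    field_simp
  rw [hrhs]
  have : E * (2 * deriv f t / ((m:ℝ) - 1)) * g + E * D
      ≤ E * (-(g^2)/((m:ℝ) - 1)) := by
    have hineq : 2 * deriv f t / ((m:ℝ) - 1) * g + D ≤ -(g^2)/((m:ℝ) - 1) := by
      have : D ≤ -g^2/((m:ℝ)-1) - 2/((m:ℝ)-1) * deriv f t * g := hkey
      have h2 : 2 * deriv f t / ((m:ℝ) - 1) * g = 2/((m:ℝ)-1) * deriv f t * g := by ring
      linarith [h2.le]
    nlinarith [mul_le_mul_of_nonneg_left hineq hEpos.le]
  have hring : E * (-(g^2)/((m:ℝ) - 1)) = -(E * g^2/((m:ℝ) - 1)) := by ring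
  linarith [hring.le, hring.ge]
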